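/- arXiv:1108.4087 — 2 statements merged into one kernel-verified Lean document; each statement's English description precedes it below -/
import Mathlib

section
/- If f∈H_σ(φ) (f bi-univalent with f'≺φ and (f⁻¹)'≺φ, φ(z)=1+B₁z+B₂z²+⋯, B₁>0), then |a₃| ≤ (1/3 + B₁/4)·B₁. -/
open Metric Complex Filter Topology NNReal

private lemma aderiv {f : ℂ → ℂ} {x : ℂ} (h : AnalyticAt ℂ f x) :
    AnalyticAt ℂ (deriv f) x := by
  have h1 : AnalyticAt ℂ ((ContinuousLinearMap.apply ℂ ℂ (1:ℂ)) ∘ (fderiv ℂ f)) x :=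
    ((ContinuousLinearMap.apply ℂ ℂ (1:ℂ)).analyticAt _).comp h.fderiv
  have h2 : ((ContinuousLinearMap.apply ℂ ℂ (1:ℂ)) ∘ (fderiv ℂ f)) = deriv f := by
    funext y; exact fderiv_apply_one_eq_deriv
  rwa [h2] at h1

private lemma ev_deriv_comp {p q : ℂ → ℂ} {x : ℂ} (hp : AnalyticAt ℂ p (q x))
    (hq : AnalyticAt ℂ q x) :
    deriv (p ∘ q) =ᶠ[𝓝 x] fun z => deriv p (q z) * deriv q z := by
  have h1 : ∀ᶠ z in 𝓝 x, AnalyticAt ℂ q z := hq.eventually_analyticAt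
  have h2 : ∀ᶠ z in 𝓝 x, AnalyticAt ℂ p (q z) :=
    hq.continuousAt.eventually hp.eventually_analyticAt
  filter_upwards [h1, h2] with z h1z h2z
  exact deriv_comp z h2z.differentiableAt h1z.differentiableAt

private lemma comp_d1 {p q : ℂ → ℂ} {x : ℂ} (hp : AnalyticAt ℂ p (q x))
    (hq : AnalyticAt ℂ q x) :
    deriv (p ∘ q) x = deriv p (q x) * deriv q x :=
  (ev_deriv_comp hp hq).eq_of_nhds

private lemma comp_d2 {p q : ℂ → ℂ} {x : ℂ} (hp : AnalyticAt ℂ p (q x))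
    (hq : AnalyticAt ℂ q x) :
    iteratedDeriv 2 (p ∘ q) x
      = iteratedDeriv 2 p (q x) * (deriv q x) ^ 2
        + deriv p (q x) * iteratedDeriv 2 q x := by
  have h1 := ev_deriv_comp hp hq
  have e1 : iteratedDeriv 2 (p ∘ q) x
      = deriv (fun z => deriv p (q z) * deriv q z) x := by
    rw [iteratedDeriv_succ, iteratedDeriv_one]
    exact h1.deriv.eq_of_nhds
  have hA : AnalyticAt ℂ (fun z => deriv p (q z)) x := (aderiv hp).comp hq
  have hB : AnalyticAt ℂ (deriv q) x := aderiv hq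
  rw [e1, deriv_fun_mul hA.differentiableAt hB.differentiableAt]
  have e2 : deriv (fun z => deriv p (q z)) x = deriv (deriv p) (q x) * deriv q x :=
    comp_d1 (aderiv hp) hq
  rw [e2]
  rw [show iteratedDeriv 2 p = deriv (deriv p) by
    rw [iteratedDeriv_succ, iteratedDeriv_one],
    show iteratedDeriv 2 q = deriv (deriv q) by
    rw [iteratedDeriv_succ, iteratedDeriv_one]]
  ring

private lemma mul_d2 {a b : ℂ → ℂ} {x : ℂ} (ha : AnalyticAt ℂ a x) (hb : AnalyticAt ℂ b x) :
    iteratedDeriv 2 (fun z => a z * b z) x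
      = iteratedDeriv 2 a x * b x + 2 * deriv a x * deriv b x
        + a x * iteratedDeriv 2 b x := by
  have hev : deriv (fun z => a z * b z) =ᶠ[𝓝 x]
      fun z => deriv a z * b z + a z * deriv b z := by
    filter_upwards [ha.eventually_analyticAt, hb.eventually_analyticAt] with z haz hbz
    exact deriv_mul haz.differentiableAt hbz.differentiableAt
  have e1 : iteratedDeriv 2 (fun z => a z * b z) x
      = deriv (fun z => deriv a z * b z + a z * deriv b z) x := by
    rw [iteratedDeriv_succ, iteratedDeriv_one]
    exact hev.deriv.eq_of_nhds
  rw [e1, deriv_fun_add (f := fun z => deriv a z * b z) (g := fun z => a z * deriv b z) ((aderiv ha).mul hb).differentiableAt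
      (ha.mul (aderiv hb)).differentiableAt,
    deriv_fun_mul (aderiv ha).differentiableAt hb.differentiableAt,
    deriv_fun_mul ha.differentiableAt (aderiv hb).differentiableAt,
    show iteratedDeriv 2 a = deriv (deriv a) by rw [iteratedDeriv_succ, iteratedDeriv_one],
    show iteratedDeriv 2 b = deriv (deriv b) by rw [iteratedDeriv_succ, iteratedDeriv_one]]
  ring

set_option maxHeartbeats 1000000 in
private lemma comp_d3 {p q : ℂ → ℂ} {x : ℂ} (hp : AnalyticAt ℂ p (q x))
    (hq : AnalyticAt ℂ q x) :
    iteratedDeriv 3 (p ∘ q) x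
      = iteratedDeriv 3 p (q x) * (deriv q x) ^ 3
        + 3 * iteratedDeriv 2 p (q x) * deriv q x * iteratedDeriv 2 q x
        + deriv p (q x) * iteratedDeriv 3 q x := by
  have h1 := ev_deriv_comp hp hq
  have e1 : iteratedDeriv 3 (p ∘ q) x
      = iteratedDeriv 2 (fun z => deriv p (q z) * deriv q z) x := by
    rw [show (3:ℕ) = 2 + 1 from rfl, iteratedDeriv_succ']
    exact h1.iteratedDeriv_eq 2
  have hA : AnalyticAt ℂ (fun z => deriv p (q z)) x := (aderiv hp).comp hq
  rw [e1, mul_d2 hA (aderiv hq)]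
  have e2 := comp_d2 (aderiv hp) hq
  rw [Function.comp_def] at e2
  have e3 : deriv (fun z => deriv p (q z)) x = deriv (deriv p) (q x) * deriv q x :=
    comp_d1 (aderiv hp) hq
  rw [e2, e3,
    show iteratedDeriv 2 (deriv p) = iteratedDeriv 3 p from (iteratedDeriv_succ' (n:=2) (f:=p)).symm,
    show iteratedDeriv 2 (deriv q) = iteratedDeriv 3 q from (iteratedDeriv_succ' (n:=2) (f:=q)).symm,
    show deriv (deriv p) = iteratedDeriv 2 p by rw [iteratedDeriv_succ, iteratedDeriv_one],
    show deriv (deriv q) = iteratedDeriv 2 q by rw [iteratedDeriv_succ, iteratedDeriv_one]]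
  ring

noncomputable def tc (f : ℂ → ℂ) (n : ℕ) : ℂ := iteratedDeriv n f 0 / n.factorial

private lemma coeff_le_one {h : ℂ → ℂ} (hh : AnalyticOn ℂ h (ball (0:ℂ) 1))
    (hmap : ∀ z ∈ ball (0:ℂ) 1, h z ∈ ball (0:ℂ) 1) (n : ℕ) : ‖tc h n‖ ≤ 1 := by
  have key : ∀ r : ℝ≥0, 0 < r → (r:ℝ) < 1 → ‖tc h n‖ ≤ ((r:ℝ)⁻¹) ^ n := by
    intro r hr0 hr1
    have hsub : closedBall (0:ℂ) r ⊆ ball (0:ℂ) 1 := by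
      intro z hz
      simp only [mem_closedBall, mem_ball] at hz ⊢
      exact lt_of_le_of_lt hz hr1
    have hdiff : DifferentiableOn ℂ h (closedBall (0:ℂ) r) :=
      (hh.differentiableOn).mono hsub
    have hps := hdiff.hasFPowerSeriesOnBall hr0
    -- tc h n equals the coefficient
    have hc : tc h n = cauchyPowerSeries h 0 r n (fun _ => (1:ℂ)) := by
      have := hps.factorial_smul (1:ℂ) n
      rw [← iteratedDeriv_eq_iteratedFDeriv] at this
      rw [tc, ← this]
      simp [Nat.factorial_ne_zero, div_eq_iff, mul_comm]
    have hnorm1 : ‖cauchyPowerSeries h 0 r n (fun _ => (1:ℂ))‖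
        ≤ ‖cauchyPowerSeries h 0 r n‖ := by
      simpa using (cauchyPowerSeries h 0 r n).le_opNorm (fun _ => (1:ℂ))
    have hint : (∫ θ : ℝ in (0:ℝ)..2 * Real.pi, ‖h (circleMap 0 r θ)‖) ≤ 2 * Real.pi := by
      have hcont : ContinuousOn h (ball (0:ℂ) 1) := hh.continuousOn
      have hmem : ∀ θ : ℝ, circleMap 0 r θ ∈ ball (0:ℂ) 1 := by
        intro θ
        simp only [mem_ball, dist_zero_right]
        rw [show ‖circleMap 0 (↑r) θ‖ = |(r:ℝ)| by simp [circleMap, norm_mul]]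
        simpa [_root_.abs_of_nonneg r.coe_nonneg] using hr1
      have hc2 : Continuous fun θ : ℝ => ‖h (circleMap 0 r θ)‖ := by
        apply Continuous.norm
        exact hcont.comp_continuous (continuous_circleMap 0 r) hmem
      calc (∫ θ : ℝ in (0:ℝ)..2 * Real.pi, ‖h (circleMap 0 r θ)‖)
          ≤ ∫ _ : ℝ in (0:ℝ)..2 * Real.pi, (1:ℝ) := by
            apply intervalIntegral.integral_mono_on Real.two_pi_pos.le
              (hc2.intervalIntegrable _ _) intervalIntegrable_const
            intro θ _
            exact le_of_lt (by simpa [mem_ball, dist_zero_right] using hmap _ (hmem θ))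
        _ = 2 * Real.pi := by simp
    have hnorm2 : ‖cauchyPowerSeries h 0 r n‖ ≤ 1 * |(r:ℝ)|⁻¹ ^ n := by
      refine (norm_cauchyPowerSeries_le h 0 r n).trans ?_
      gcongr
      rw [inv_mul_le_iff₀ Real.two_pi_pos]
      simpa using hint
    rw [hc]
    refine hnorm1.trans (hnorm2.trans ?_)
    rw [one_mul, _root_.abs_of_nonneg r.coe_nonneg]
  -- pass to the limit r → 1⁻
  have hlim : Tendsto (fun r : ℝ => (r⁻¹) ^ n) (𝓝[<] (1:ℝ)) (𝓝 1) := by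
    have : ContinuousAt (fun r : ℝ => (r⁻¹) ^ n) 1 :=
      ((continuousAt_inv₀ one_ne_zero).pow n)
    simpa using this.tendsto.mono_left nhdsWithin_le_nhds
  refine ge_of_tendsto hlim ?_
  filter_upwards [self_mem_nhdsWithin,
    eventually_nhdsWithin_of_eventually_nhds (eventually_gt_nhds (by norm_num : (0:ℝ) < 1))]
    with r hr1 hr0
  exact key ⟨r, hr0.le⟩ hr0 hr1

theorem stmt10 (f g u v φ : ℂ → ℂ) (B₁ B₂ : ℝ)
    (hf : AnalyticOn ℂ f (ball (0:ℂ) 1)) (hfinj : Set.InjOn f (ball (0:ℂ) 1))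
    (hf0 : f 0 = 0) (hf1 : deriv f 0 = 1)
    (hg : AnalyticOn ℂ g (ball (0:ℂ) 1)) (hginj : Set.InjOn g (ball (0:ℂ) 1))
    (hinv : ∀ᶠ z in 𝓝 (0:ℂ), g (f z) = z)
    (hu : AnalyticOn ℂ u (ball (0:ℂ) 1)) (humap : ∀ z ∈ ball (0:ℂ) 1, u z ∈ ball (0:ℂ) 1) (hu0 : u 0 = 0)
    (hv : AnalyticOn ℂ v (ball (0:ℂ) 1)) (hvmap : ∀ w ∈ ball (0:ℂ) 1, v w ∈ ball (0:ℂ) 1) (hv0 : v 0 = 0)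
    (hφ : AnalyticOn ℂ φ (ball (0:ℂ) 1)) (hφ0 : φ 0 = 1)
    (hB₁ : tc φ 1 = (B₁ : ℂ)) (hB₂ : tc φ 2 = (B₂ : ℂ)) (hB₁pos : 0 < B₁)
    (hfu : ∀ z ∈ ball (0:ℂ) 1, deriv f z = φ (u z))
    (hgv : ∀ w ∈ ball (0:ℂ) 1, deriv g w = φ (v w)) :
    ‖tc f 3‖ ≤ (1 / 3 + B₁ / 4) * B₁ := by
  have hb : (0:ℂ) ∈ ball (0:ℂ) 1 := mem_ball_self one_pos
  have hnb : ball (0:ℂ) 1 ∈ 𝓝 (0:ℂ) := isOpen_ball.mem_nhds hb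
  have haf : AnalyticAt ℂ f 0 := hf.differentiableOn.analyticAt hnb
  have hag : AnalyticAt ℂ g 0 := hg.differentiableOn.analyticAt hnb
  have hau : AnalyticAt ℂ u 0 := hu.differentiableOn.analyticAt hnb
  have hav : AnalyticAt ℂ v 0 := hv.differentiableOn.analyticAt hnb
  have haφ : AnalyticAt ℂ φ 0 := hφ.differentiableOn.analyticAt hnb
  have haφu : AnalyticAt ℂ φ (u 0) := by rwa [hu0]
  have haφv : AnalyticAt ℂ φ (v 0) := by rwa [hv0]
  have hagf : AnalyticAt ℂ g (f 0) := by rwa [hf0]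
  -- notation
  set c1 := deriv u 0 with hc1def
  set c2 := iteratedDeriv 2 u 0 with hc2def
  set d1 := deriv v 0 with hd1def
  set d2 := iteratedDeriv 2 v 0 with hd2def
  -- values of φ derivatives
  have hφ1 : deriv φ 0 = (B₁:ℂ) := by
    have := hB₁
    rw [tc, iteratedDeriv_one] at this
    simpa using this
  have hφ2 : iteratedDeriv 2 φ 0 = 2 * (B₂:ℂ) := by
    have := hB₂
    rw [tc] at this
    field_simp at this
    linear_combination this
  -- eventual equalities
  have hfu' : deriv f =ᶠ[𝓝 (0:ℂ)] (φ ∘ u) :=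
    eventually_of_mem hnb fun z hz => hfu z hz
  have hgv' : deriv g =ᶠ[𝓝 (0:ℂ)] (φ ∘ v) :=
    eventually_of_mem hnb fun z hz => hgv z hz
  -- second and third derivatives of f
  have Ef2 : iteratedDeriv 2 f 0 = (B₁:ℂ) * c1 := by
    rw [iteratedDeriv_succ, iteratedDeriv_one, hfu'.deriv_eq, comp_d1 haφu hau, hu0, hφ1]
  have Ef3 : iteratedDeriv 3 f 0 = 2 * (B₂:ℂ) * c1 ^ 2 + (B₁:ℂ) * c2 := by
    have e : iteratedDeriv 3 f 0 = iteratedDeriv 2 (φ ∘ u) 0 := by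
      rw [show (3:ℕ) = 2 + 1 from rfl, iteratedDeriv_succ']
      exact hfu'.iteratedDeriv_eq 2
    rw [e, comp_d2 haφu hau, hu0, hφ1, hφ2]
  -- second and third derivatives of g
  have Eg2 : iteratedDeriv 2 g 0 = (B₁:ℂ) * d1 := by
    rw [iteratedDeriv_succ, iteratedDeriv_one, hgv'.deriv_eq, comp_d1 haφv hav, hv0, hφ1]
  have Eg3 : iteratedDeriv 3 g 0 = 2 * (B₂:ℂ) * d1 ^ 2 + (B₁:ℂ) * d2 := by
    have e : iteratedDeriv 3 g 0 = iteratedDeriv 2 (φ ∘ v) 0 := by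
      rw [show (3:ℕ) = 2 + 1 from rfl, iteratedDeriv_succ']
      exact hgv'.iteratedDeriv_eq 2
    rw [e, comp_d2 haφv hav, hv0, hφ1, hφ2]
  -- inverse function relations
  have hgfev : (g ∘ f) =ᶠ[𝓝 (0:ℂ)] fun z => z := hinv
  have hidd : deriv (fun z : ℂ => z) = fun _ => (1:ℂ) := by
    funext x; simp
  have hid2f : iteratedDeriv 2 (fun z : ℂ => z) = fun _ => (0:ℂ) := by
    funext x
    rw [iteratedDeriv_succ, iteratedDeriv_one, hidd]
    simp
  have hid2 : iteratedDeriv 2 (fun z : ℂ => z) 0 = 0 := by rw [hid2f]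
  have hid3 : iteratedDeriv 3 (fun z : ℂ => z) 0 = 0 := by
    rw [iteratedDeriv_succ, hid2f]
    simp
  have EG1 : deriv g 0 = 1 := by
    have e1 : deriv (g ∘ f) 0 = 1 := by
      rw [hgfev.deriv_eq, hidd]
    rw [comp_d1 hagf haf, hf0, hf1, mul_one] at e1
    exact e1
  have EG2 : iteratedDeriv 2 g 0 = - iteratedDeriv 2 f 0 := by
    have e1 : iteratedDeriv 2 (g ∘ f) 0 = 0 := by
      rw [hgfev.iteratedDeriv_eq 2, hid2]
    rw [comp_d2 hagf haf, hf0, hf1, EG1] at e1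
    linear_combination e1
  have EG3 : iteratedDeriv 3 g 0 = 3 * (iteratedDeriv 2 f 0) ^ 2 - iteratedDeriv 3 f 0 := by
    have e1 : iteratedDeriv 3 (g ∘ f) 0 = 0 := by
      rw [hgfev.iteratedDeriv_eq 3, hid3]
    rw [comp_d3 hagf haf, hf0, hf1, EG1, EG2] at e1
    linear_combination e1
  -- d1 = -c1
  have hB₁ne : (B₁:ℂ) ≠ 0 := by
    exact_mod_cast hB₁pos.ne'
  have hd1 : d1 = -c1 := by
    have : (B₁:ℂ) * d1 = (B₁:ℂ) * (-c1) := by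
      rw [← Eg2, EG2, Ef2]; ring
    exact mul_left_cancel₀ hB₁ne this
  -- the key identity
  have key : 2 * iteratedDeriv 3 f 0
      = 3 * (B₁:ℂ) ^ 2 * c1 ^ 2 + (B₁:ℂ) * c2 - (B₁:ℂ) * d2 := by
    linear_combination Ef3 - Eg3 + EG3 + 3 * (iteratedDeriv 2 f 0 + (B₁:ℂ) * c1) * Ef2
      + 2 * (B₂:ℂ) * (c1 - d1) * hd1
  have htc : tc f 3 = (B₁:ℂ) ^ 2 * c1 ^ 2 / 4 + (B₁:ℂ) * (c2 - d2) / 12 := by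
    rw [tc]
    have : (((3:ℕ).factorial : ℂ)) = 6 := by norm_num [Nat.factorial]
    rw [this]
    field_simp
    linear_combination 24 * key
  -- coefficient bounds
  have hc1b : ‖c1‖ ≤ 1 := by
    have := coeff_le_one hu humap 1
    rw [tc, iteratedDeriv_one] at this
    simpa using this
  have hc2b : ‖c2‖ ≤ 2 := by
    have := coeff_le_one hu humap 2
    rw [tc] at this
    rw [show ((2:ℕ).factorial : ℂ) = 2 by norm_num [Nat.factorial]] at this
    rw [norm_div] at this
    simp only [Complex.norm_ofNat] at this
    linarith [this]
  have hd2b : ‖d2‖ ≤ 2 := by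
    have := coeff_le_one hv hvmap 2
    rw [tc] at this
    rw [show ((2:ℕ).factorial : ℂ) = 2 by norm_num [Nat.factorial]] at this
    rw [norm_div] at this
    simp only [Complex.norm_ofNat] at this
    linarith [this]
  -- final estimate
  have hB₁n : ‖(B₁:ℂ)‖ = B₁ := by
    rw [Complex.norm_real, Real.norm_eq_abs, abs_of_pos hB₁pos]
  calc ‖tc f 3‖ ≤ ‖(B₁:ℂ) ^ 2 * c1 ^ 2 / 4‖ + ‖(B₁:ℂ) * (c2 - d2) / 12‖ := by
        rw [htc]; exact norm_add_le _ _
    _ = B₁ ^ 2 * ‖c1‖ ^ 2 / 4 + B₁ * ‖c2 - d2‖ / 12 := by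
        rw [norm_div, norm_div, norm_mul, norm_mul, norm_pow, norm_pow, hB₁n]
        norm_num
    _ ≤ B₁ ^ 2 * 1 ^ 2 / 4 + B₁ * (‖c2‖ + ‖d2‖) / 12 := by
        gcongr
        · exact norm_sub_le _ _
    _ ≤ B₁ ^ 2 * 1 ^ 2 / 4 + B₁ * (2 + 2) / 12 := by gcongr
    _ = (1 / 3 + B₁ / 4) * B₁ := by ring
end

section
/- If f is bi-univalent on 𝔻 with zf'(z)/f(z) ≺ φ(z) and wg'(w)/g(w) ≺ φ(w) for g=f⁻¹, where φ(z)=1+B₁z+B₂z²+⋯ with B₁>0 and B₁²+B₁−B₂≠0, then |a₂| ≤ B₁√B₁/√|B₁²+B₁−B₂| and |a₃| ≤ B₁+|B₂−B₁|. -/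
open Metric Complex Filter Topology

section helpers


lemma tc2 (f : ℂ → ℂ) : tc f 2 = deriv (deriv f) 0 / 2 := by
  simp [tc, iteratedDeriv_succ, iteratedDeriv_one]

lemma tc3 (f : ℂ → ℂ) : tc f 3 = deriv (deriv (deriv f)) 0 / 6 := by
  have : (Nat.factorial 3 : ℂ) = 6 := by norm_num [Nat.factorial]
  simp [tc, iteratedDeriv_succ, iteratedDeriv_one, this]

lemma deriv_comp'' (h₂ h : ℂ → ℂ) (z : ℂ) (d2 : DifferentiableAt ℂ h₂ (h z))
    (d1 : DifferentiableAt ℂ h z) :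
    deriv (fun x => h₂ (h x)) z = deriv h₂ (h z) * deriv h z := deriv_comp (x := z) d2 d1

lemma inv_coeffs (f g : ℂ → ℂ)
    (hf : AnalyticOnNhd ℂ f (ball (0:ℂ) 1)) (hg : AnalyticOnNhd ℂ g (ball (0:ℂ) 1))
    (hf0 : f 0 = 0) (hf1 : deriv f 0 = 1)
    (hinv : ∀ᶠ z in 𝓝 (0:ℂ), g (f z) = z) :
    g 0 = 0 ∧ deriv g 0 = 1 ∧ tc g 2 = - tc f 2 ∧ tc g 3 = 2 * (tc f 2)^2 - tc f 3 := by
  have h01 : (0:ℂ) ∈ ball (0:ℂ) 1 := mem_ball_self one_pos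
  have hg0 : g 0 = 0 := by have := hinv.self_of_nhds; rwa [hf0] at this
  have hmem : ∀ᶠ z in 𝓝 (0:ℂ), z ∈ ball (0:ℂ) 1 ∧ f z ∈ ball (0:ℂ) 1 := by
    have h1 : ∀ᶠ z in 𝓝 (0:ℂ), z ∈ ball (0:ℂ) 1 :=
      eventually_of_mem (isOpen_ball.mem_nhds h01) (fun _ h => h)
    have h2 : ∀ᶠ z in 𝓝 (0:ℂ), f z ∈ ball (0:ℂ) 1 :=
      (hf 0 h01).continuousAt.eventually_mem (by rw [hf0]; exact isOpen_ball.mem_nhds h01)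
    exact h1.and h2
  have hf' := hf.deriv
  have hf'' := hf'.deriv
  have hg' := hg.deriv
  have hg'' := hg'.deriv
  have eq1 : (fun z => deriv g (f z) * deriv f z) =ᶠ[𝓝 (0:ℂ)] fun _ => 1 := by
    have hEE : (fun z => g (f z)) =ᶠ[𝓝 (0:ℂ)] (fun z => z) := hinv
    have h := hEE.deriv
    have hid : deriv (fun z : ℂ => z) = fun _ => (1:ℂ) := by funext z; simp
    rw [hid] at h
    refine EventuallyEq.trans ?_ h
    filter_upwards [hmem] with z hz
    exact (deriv_comp'' g f z (hg _ hz.2).differentiableAt (hf _ hz.1).differentiableAt).symm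
  have eq2 : (fun z => deriv (deriv g) (f z) * deriv f z * deriv f z
      + deriv g (f z) * deriv (deriv f) z) =ᶠ[𝓝 (0:ℂ)] fun _ => 0 := by
    have h := eq1.deriv
    have hc : deriv (fun _ : ℂ => (1:ℂ)) = fun _ => (0:ℂ) := by funext z; simp
    rw [hc] at h
    refine EventuallyEq.trans ?_ h
    filter_upwards [hmem] with z hz
    have d1 : DifferentiableAt ℂ (fun z => deriv g (f z)) z :=
      ((hg' _ hz.2).differentiableAt).comp z (hf _ hz.1).differentiableAt
    have d2 : DifferentiableAt ℂ (deriv f) z := (hf' _ hz.1).differentiableAt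
    rw [deriv_fun_mul d1 d2,
      deriv_comp'' (deriv g) f z (hg' _ hz.2).differentiableAt (hf _ hz.1).differentiableAt]
  have eq3 : (fun z =>
      (deriv (deriv (deriv g)) (f z) * deriv f z * deriv f z
        + deriv (deriv g) (f z) * deriv (deriv f) z) * deriv f z
      + deriv (deriv g) (f z) * deriv f z * deriv (deriv f) z
      + (deriv (deriv g) (f z) * deriv f z * deriv (deriv f) z
        + deriv g (f z) * deriv (deriv (deriv f)) z)) =ᶠ[𝓝 (0:ℂ)] fun _ => 0 := by
    have h := eq2.deriv
    have hc : deriv (fun _ : ℂ => (0:ℂ)) = fun _ => (0:ℂ) := by funext z; simp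
    rw [hc] at h
    refine EventuallyEq.trans ?_ h
    filter_upwards [hmem] with z hz
    have dgf : DifferentiableAt ℂ f z := (hf _ hz.1).differentiableAt
    have d1 : DifferentiableAt ℂ (fun z => deriv (deriv g) (f z)) z :=
      ((hg'' _ hz.2).differentiableAt).comp z dgf
    have d2 : DifferentiableAt ℂ (deriv f) z := (hf' _ hz.1).differentiableAt
    have d3 : DifferentiableAt ℂ (fun z => deriv g (f z)) z :=
      ((hg' _ hz.2).differentiableAt).comp z dgf
    have d4 : DifferentiableAt ℂ (deriv (deriv f)) z := (hf'' _ hz.1).differentiableAt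
    rw [deriv_fun_add ((d1.fun_mul d2).fun_mul d2) (d3.fun_mul d4), deriv_fun_mul (d1.fun_mul d2) d2,
      deriv_fun_mul d1 d2, deriv_fun_mul d3 d4,
      deriv_comp'' (deriv (deriv g)) f z (hg'' _ hz.2).differentiableAt dgf,
      deriv_comp'' (deriv g) f z (hg' _ hz.2).differentiableAt dgf]
  have e1 := eq1.self_of_nhds
  have e2 := eq2.self_of_nhds
  have e3 := eq3.self_of_nhds
  simp only [hf0, hf1, hg0, mul_one, one_mul] at e1 e2 e3
  rw [e1] at e2 e3
  have h2 : deriv (deriv g) 0 = - deriv (deriv f) 0 := by linear_combination e2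
  rw [h2] at e3
  have h3 : deriv (deriv (deriv g)) 0
      = 3*(deriv (deriv f) 0)^2 - deriv (deriv (deriv f)) 0 := by linear_combination e3
  refine ⟨hg0, e1, ?_, ?_⟩
  · rw [tc2, tc2, h2]; ring
  · rw [tc3, tc3, tc2, h3]; ring



lemma sub_coeffs (F P : ℂ → ℂ)
    (hF : AnalyticOnNhd ℂ F (ball (0:ℂ) 1)) (hP : AnalyticOnNhd ℂ P (ball (0:ℂ) 1))
    (hF0 : F 0 = 0) (hF1 : deriv F 0 = 1)
    (heq : ∀ z ∈ ball (0:ℂ) 1, z * deriv F z = P z * F z) :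
    P 0 = 1 ∧ deriv P 0 = tc F 2 ∧
      deriv (deriv P) 0 = 4 * tc F 3 - 2 * (tc F 2)^2 := by
  have h01 : (0:ℂ) ∈ ball (0:ℂ) 1 := mem_ball_self one_pos
  have hmem : ∀ᶠ z in 𝓝 (0:ℂ), z ∈ ball (0:ℂ) 1 :=
    eventually_of_mem (isOpen_ball.mem_nhds h01) (fun _ h => h)
  have hF' := hF.deriv
  have hF'' := hF'.deriv
  have hF''' := hF''.deriv
  have hP' := hP.deriv
  have hP'' := hP'.deriv
  have eq0 : (fun z => z * deriv F z) =ᶠ[𝓝 (0:ℂ)] (fun z => P z * F z) :=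
    hmem.mono (fun z hz => heq z hz)
  have eq1 : (fun z => deriv F z + z * deriv (deriv F) z) =ᶠ[𝓝 (0:ℂ)]
      (fun z => deriv P z * F z + P z * deriv F z) := by
    have h := eq0.deriv
    refine EventuallyEq.trans ?_ (h.trans ?_)
    · filter_upwards [hmem] with z hz
      rw [deriv_fun_mul differentiableAt_fun_id (hF' _ hz).differentiableAt]
      simp
    · filter_upwards [hmem] with z hz
      rw [deriv_fun_mul (hP _ hz).differentiableAt (hF _ hz).differentiableAt]
  have eq2 : (fun z => deriv (deriv F) z + (deriv (deriv F) z + z * deriv (deriv (deriv F)) z))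
      =ᶠ[𝓝 (0:ℂ)]
      (fun z => (deriv (deriv P) z * F z + deriv P z * deriv F z)
        + (deriv P z * deriv F z + P z * deriv (deriv F) z)) := by
    have h := eq1.deriv
    refine EventuallyEq.trans ?_ (h.trans ?_)
    · filter_upwards [hmem] with z hz
      rw [deriv_fun_add (hF' _ hz).differentiableAt
          (differentiableAt_fun_id.fun_mul (hF'' _ hz).differentiableAt),
        deriv_fun_mul differentiableAt_fun_id (hF'' _ hz).differentiableAt]
      simp
    · filter_upwards [hmem] with z hz
      rw [deriv_fun_add ((hP' _ hz).differentiableAt.fun_mul (hF _ hz).differentiableAt)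
          ((hP _ hz).differentiableAt.fun_mul (hF' _ hz).differentiableAt),
        deriv_fun_mul (hP' _ hz).differentiableAt (hF _ hz).differentiableAt,
        deriv_fun_mul (hP _ hz).differentiableAt (hF' _ hz).differentiableAt]
  have eq3 : (fun z => deriv (deriv (deriv F)) z + (deriv (deriv (deriv F)) z
        + (deriv (deriv (deriv F)) z + z * deriv (deriv (deriv (deriv F))) z)))
      =ᶠ[𝓝 (0:ℂ)]
      (fun z => ((deriv (deriv (deriv P)) z * F z + deriv (deriv P) z * deriv F z)
          + (deriv (deriv P) z * deriv F z + deriv P z * deriv (deriv F) z))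
        + ((deriv (deriv P) z * deriv F z + deriv P z * deriv (deriv F) z)
          + (deriv P z * deriv (deriv F) z + P z * deriv (deriv (deriv F)) z))) := by
    have h := eq2.deriv
    refine EventuallyEq.trans ?_ (h.trans ?_)
    · filter_upwards [hmem] with z hz
      rw [deriv_fun_add (hF'' _ hz).differentiableAt
          ((hF'' _ hz).differentiableAt.fun_add
            (differentiableAt_fun_id.fun_mul (hF''' _ hz).differentiableAt)),
        deriv_fun_add (hF'' _ hz).differentiableAt
          (differentiableAt_fun_id.fun_mul (hF''' _ hz).differentiableAt),
        deriv_fun_mul differentiableAt_fun_id (hF''' _ hz).differentiableAt]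
      simp
    · filter_upwards [hmem] with z hz
      have dP := (hP _ hz).differentiableAt
      have dP' := (hP' _ hz).differentiableAt
      have dP'' := (hP'' _ hz).differentiableAt
      have dF := (hF _ hz).differentiableAt
      have dF' := (hF' _ hz).differentiableAt
      have dF'' := (hF'' _ hz).differentiableAt
      rw [deriv_fun_add ((dP''.fun_mul dF).fun_add (dP'.fun_mul dF')) ((dP'.fun_mul dF').fun_add (dP.fun_mul dF'')),
        deriv_fun_add (dP''.fun_mul dF) (dP'.fun_mul dF'),
        deriv_fun_add (dP'.fun_mul dF') (dP.fun_mul dF''),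
        deriv_fun_mul dP'' dF, deriv_fun_mul dP' dF', deriv_fun_mul dP dF'']
  have e1 := eq1.self_of_nhds
  have e2 := eq2.self_of_nhds
  have e3 := eq3.self_of_nhds
  simp only [hF0, hF1, mul_zero, mul_one, zero_mul, add_zero, zero_add] at e1 e2 e3
  -- e1 : 1 = P 0
  have hP0 : P 0 = 1 := e1.symm
  rw [hP0] at e2 e3
  have hP1 : deriv P 0 = tc F 2 := by rw [tc2]; linear_combination -e2 / 2
  refine ⟨hP0, hP1, ?_⟩
  rw [tc3, tc2]
  rw [hP1, tc2] at e3
  linear_combination (-1/3 : ℂ) * e3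


lemma comp_coeffs (φ u : ℂ → ℂ)
    (hφ : AnalyticOnNhd ℂ φ (ball (0:ℂ) 1)) (hu : AnalyticOnNhd ℂ u (ball (0:ℂ) 1))
    (humap : ∀ z ∈ ball (0:ℂ) 1, u z ∈ ball (0:ℂ) 1) (hu0 : u 0 = 0) :
    deriv (fun z => φ (u z)) 0 = deriv φ 0 * deriv u 0 ∧
    deriv (deriv (fun z => φ (u z))) 0
      = deriv (deriv φ) 0 * (deriv u 0)^2 + deriv φ 0 * deriv (deriv u) 0 := by
  have h01 : (0:ℂ) ∈ ball (0:ℂ) 1 := mem_ball_self one_pos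
  have hmem : ∀ᶠ z in 𝓝 (0:ℂ), z ∈ ball (0:ℂ) 1 :=
    eventually_of_mem (isOpen_ball.mem_nhds h01) (fun _ h => h)
  have hφ' := hφ.deriv
  have hφ'' := hφ'.deriv
  have hu' := hu.deriv
  have hu'' := hu'.deriv
  have eqd : deriv (fun z => φ (u z)) =ᶠ[𝓝 (0:ℂ)] (fun z => deriv φ (u z) * deriv u z) := by
    filter_upwards [hmem] with z hz
    exact deriv_comp'' φ u z (hφ _ (humap z hz)).differentiableAt (hu _ hz).differentiableAt
  constructor
  · have := eqd.self_of_nhds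
    simp only [] at this
    rw [this]; rw [hu0]
  · have h := eqd.deriv
    have h2 : deriv (fun z => deriv φ (u z) * deriv u z) =ᶠ[𝓝 (0:ℂ)]
        (fun z => (deriv (deriv φ) (u z) * deriv u z) * deriv u z
          + deriv φ (u z) * deriv (deriv u) z) := by
      filter_upwards [hmem] with z hz
      have d1 : DifferentiableAt ℂ (fun z => deriv φ (u z)) z :=
        ((hφ' _ (humap z hz)).differentiableAt).comp z (hu _ hz).differentiableAt
      rw [deriv_fun_mul d1 (hu' _ hz).differentiableAt,
        deriv_comp'' (deriv φ) u z (hφ' _ (humap z hz)).differentiableAt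
          (hu _ hz).differentiableAt]
    have := (h.trans h2).self_of_nhds
    simp only [] at this
    rw [this, hu0]; ring


lemma moebius_lt (a ζ : ℂ) (ha : ‖a‖ < 1) (hζ : ‖ζ‖ < 1) :
    ‖ζ - a‖ < ‖1 - (starRingEnd ℂ) a * ζ‖ := by
  have hA : Complex.normSq a < 1 := by
    have : ‖a‖^2 < 1 := by nlinarith [norm_nonneg a]
    rwa [← Complex.normSq_eq_norm_sq] at this
  have hZ : Complex.normSq ζ < 1 := by
    have : ‖ζ‖^2 < 1 := by nlinarith [norm_nonneg ζ]
    rwa [← Complex.normSq_eq_norm_sq] at this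
  have key : 0 < (1 - Complex.normSq a) * (1 - Complex.normSq ζ) :=
    mul_pos (by linarith) (by linarith)
  refine lt_of_pow_lt_pow_left₀ 2 (norm_nonneg _) ?_
  rw [← Complex.normSq_eq_norm_sq, ← Complex.normSq_eq_norm_sq]
  simp only [Complex.normSq_apply, Complex.sub_re, Complex.sub_im, Complex.mul_re,
    Complex.mul_im, Complex.one_re, Complex.one_im, Complex.conj_re, Complex.conj_im] at *
  nlinarith [key, sq_nonneg (a.re*ζ.re + a.im*ζ.im), sq_nonneg (a.re*ζ.im - a.im*ζ.re)]

lemma schwarz_pick (u : ℂ → ℂ)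
    (hu : AnalyticOnNhd ℂ u (ball (0:ℂ) 1))
    (humap : ∀ z ∈ ball (0:ℂ) 1, u z ∈ ball (0:ℂ) 1) (hu0 : u 0 = 0) :
    ‖deriv u 0‖ ≤ 1 ∧ ‖deriv (deriv u) 0‖ / 2 ≤ 1 - ‖deriv u 0‖^2 := by
  have h01 : (0:ℂ) ∈ ball (0:ℂ) 1 := mem_ball_self one_pos
  set w : ℂ → ℂ := dslope u 0 with hw
  -- w is analytic on the ball
  have wa : AnalyticOnNhd ℂ w (ball (0:ℂ) 1) := by
    intro z hz
    rcases eq_or_ne z 0 with rfl | hz0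
    · obtain ⟨p, hp⟩ := hu 0 h01
      exact hp.has_fpower_series_dslope_fslope.analyticAt
    · have h1 : AnalyticAt ℂ (fun y => (u y - u 0) / (y - 0)) z := by
        exact ((hu z hz).sub analyticAt_const).div
          (analyticAt_id.sub analyticAt_const) (sub_ne_zero.2 hz0)
      refine h1.congr ?_
      have : ∀ᶠ y in 𝓝 z, y ≠ (0:ℂ) := isOpen_ne.eventually_mem hz0
      filter_upwards [this] with y hy
      rw [hw, dslope_of_ne u hy, slope_def_field]
  have wdiff : DifferentiableOn ℂ w (ball (0:ℂ) 1) :=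
    (differentiableOn_dslope (isOpen_ball.mem_nhds h01)).mpr (hu.differentiableOn)
  -- bound on w
  have wb : ∀ z ∈ ball (0:ℂ) 1, ‖w z‖ ≤ 1 := by
    intro z hz
    have hm : Set.MapsTo u (ball (0:ℂ) 1) (ball (u 0) 1) := by
      intro x hx; rw [hu0]; exact humap x hx
    have := Complex.norm_dslope_le_div_of_mapsTo_ball hu.differentiableOn (hm.mono_right ball_subset_closedBall) hz
    simpa using this
  have hw0 : w 0 = deriv u 0 := dslope_same u 0
  -- u z = z * w z on ball
  have huw : ∀ z, u z = z * w z := by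
    intro z
    rcases eq_or_ne z 0 with rfl | hz0
    · simp [hu0]
    · rw [hw, dslope_of_ne u hz0, slope_def_field, hu0, sub_zero, sub_zero,
        mul_div_cancel₀ _ hz0]
  -- deriv (deriv u) 0 = 2 * deriv w 0
  have hdd : deriv (deriv u) 0 = 2 * deriv w 0 := by
    have hmem : ∀ᶠ z in 𝓝 (0:ℂ), z ∈ ball (0:ℂ) 1 :=
      eventually_of_mem (isOpen_ball.mem_nhds h01) (fun _ h => h)
    have e1 : deriv u =ᶠ[𝓝 (0:ℂ)] (fun z => w z + z * deriv w z) := by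
      have e0 : u =ᶠ[𝓝 (0:ℂ)] (fun z => z * w z) := Eventually.of_forall huw
      refine e0.deriv.trans ?_
      filter_upwards [hmem] with z hz
      rw [deriv_fun_mul differentiableAt_fun_id (wa z hz).differentiableAt]
      simp
    rw [e1.deriv.self_of_nhds]
    have wa' := wa.deriv
    rw [deriv_fun_add ((wa 0 h01).differentiableAt)
        (differentiableAt_fun_id.fun_mul ((wa' 0 h01).differentiableAt)),
      deriv_fun_mul differentiableAt_fun_id ((wa' 0 h01).differentiableAt)]
    simp; ring
  -- Schwarz–Pick estimate: ∀ t ∈ Ioo 0 1, t * ‖deriv w 0‖ ≤ 1 - t^2 * ‖w 0‖^2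
  have hkey : ∀ t : ℝ, t ∈ Set.Ioo (0:ℝ) 1 → t * ‖deriv w 0‖ ≤ 1 - t^2 * ‖w 0‖^2 := by
    intro t ht
    set a : ℂ := (t:ℂ) * w 0 with ha
    have hta : ‖a‖ ≤ t := by
      rw [ha, norm_mul]
      calc ‖(t:ℂ)‖ * ‖w 0‖ ≤ ‖(t:ℂ)‖ * 1 := by
            exact mul_le_mul_of_nonneg_left (wb 0 h01) (norm_nonneg _)
        _ = t := by rw [Complex.norm_real, Real.norm_eq_abs, abs_of_pos ht.1, mul_one]
    have hta1 : ‖a‖ < 1 := lt_of_le_of_lt hta ht.2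
    set D : ℂ → ℂ := fun z => 1 - (starRingEnd ℂ) a * ((t:ℂ) * w z) with hD
    set N : ℂ → ℂ := fun z => (t:ℂ) * w z - a with hN
    have hXlt : ∀ z ∈ ball (0:ℂ) 1, ‖(starRingEnd ℂ) a * ((t:ℂ) * w z)‖ < 1 := by
      intro z hz
      rw [norm_mul, norm_mul]
      have h1 : ‖(starRingEnd ℂ) a‖ = ‖a‖ := by simp
      have h2 : ‖(t:ℂ)‖ = t := by rw [Complex.norm_real, Real.norm_eq_abs]; exact abs_of_pos ht.1
      rw [h1, h2]
      calc ‖a‖ * (t * ‖w z‖) ≤ t * (t * 1) := by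
            refine mul_le_mul hta ?_ ?_ ht.1.le
            · exact mul_le_mul_of_nonneg_left (wb z hz) ht.1.le
            · exact mul_nonneg ht.1.le (norm_nonneg _)
        _ = t * t := by ring
        _ < 1 := by nlinarith [ht.1, ht.2]
    have hDne : ∀ z ∈ ball (0:ℂ) 1, D z ≠ 0 := by
      intro z hz
      have hpos : (0:ℝ) < ‖D z‖ := by
        have hle : ‖(1:ℂ)‖ - ‖(starRingEnd ℂ) a * ((t:ℂ) * w z)‖ ≤ ‖D z‖ := by
          rw [hD]; exact norm_sub_norm_le _ _
        have := hXlt z hz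
        simp only [norm_one] at hle
        linarith
      exact norm_pos_iff.mp hpos
    have hζlt : ∀ z ∈ ball (0:ℂ) 1, ‖(t:ℂ) * w z‖ < 1 := by
      intro z hz
      rw [norm_mul]
      have h2 : ‖(t:ℂ)‖ = t := by rw [Complex.norm_real, Real.norm_eq_abs]; exact abs_of_pos ht.1
      rw [h2]
      calc t * ‖w z‖ ≤ t * 1 := mul_le_mul_of_nonneg_left (wb z hz) ht.1.le
        _ < 1 := by linarith [ht.2]
    set h : ℂ → ℂ := fun z => N z / D z with hh
    have hNdiff : DifferentiableOn ℂ N (ball (0:ℂ) 1) := by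
      rw [hN]
      exact ((differentiableOn_const _).mul wdiff).sub (differentiableOn_const _)
    have hDdiff : DifferentiableOn ℂ D (ball (0:ℂ) 1) := by
      rw [hD]
      exact (differentiableOn_const _).sub
        ((differentiableOn_const _).mul ((differentiableOn_const _).mul wdiff))
    have hdiff : DifferentiableOn ℂ h (ball (0:ℂ) 1) := hNdiff.div hDdiff hDne
    have hN0 : N 0 = 0 := by rw [hN]; simp [ha]
    have hh0 : h 0 = 0 := by rw [hh]; simp [hN0]
    have hmaps : Set.MapsTo h (ball (0:ℂ) 1) (ball (h 0) 1) := by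
      intro z hz
      rw [hh0, mem_ball, dist_eq_norm, sub_zero, hh]
      rw [norm_div]
      rw [div_lt_one (norm_pos_iff.mpr (hDne z hz))]
      rw [hN, hD]
      exact moebius_lt a ((t:ℂ) * w z) hta1 (hζlt z hz)
    have hsch : ‖deriv h 0‖ ≤ 1 := by
      have := Complex.norm_deriv_le_div_of_mapsTo_ball hdiff (hmaps.mono_right ball_subset_closedBall) one_pos
      simpa using this
    -- compute deriv h 0
    have hD0 : D 0 = 1 - (Complex.normSq a : ℂ) := by
      rw [hD, ha]
      simp only []
      rw [show (starRingEnd ℂ) ((t:ℂ) * w 0) * ((t:ℂ) * w 0) = ((t:ℂ) * w 0) * (starRingEnd ℂ) ((t:ℂ) * w 0) from mul_comm _ _, Complex.mul_conj]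
    have hDN : deriv N 0 = (t:ℂ) * deriv w 0 := by
      rw [hN]
      rw [show (fun z => (t:ℂ) * w z - a) = (fun z => (fun y => (t:ℂ) * w y) z - a) from rfl]
      rw [deriv_sub_const, deriv_const_mul _ ((wa 0 h01).differentiableAt)]
    have hnsa : Complex.normSq a = t^2 * ‖w 0‖^2 := by
      rw [Complex.normSq_eq_norm_sq, ha, norm_mul, Complex.norm_real,
        Real.norm_eq_abs, abs_of_pos ht.1, mul_pow]
    have hnsa1 : Complex.normSq a < 1 := by
      rw [hnsa]
      calc t^2 * ‖w 0‖^2 ≤ t^2 * 1 := by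
            refine mul_le_mul_of_nonneg_left ?_ (sq_nonneg t)
            have := wb 0 h01; nlinarith [norm_nonneg (w 0)]
        _ < 1 := by nlinarith [ht.1, ht.2]
    have hne0 : (1:ℂ) - (Complex.normSq a : ℂ) ≠ 0 := by
      rw [show ((1:ℂ) - (Complex.normSq a : ℂ)) = ((1 - Complex.normSq a : ℝ) : ℂ) by push_cast; ring]
      exact Complex.ofReal_ne_zero.mpr (by linarith)
    have hderivh : deriv h 0 = (t:ℂ) * deriv w 0 / (1 - (Complex.normSq a : ℂ)) := by
      rw [hh]
      rw [deriv_fun_div (hNdiff.differentiableAt (isOpen_ball.mem_nhds h01))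
        (hDdiff.differentiableAt (isOpen_ball.mem_nhds h01)) (hDne 0 h01)]
      rw [hN0, hDN, hD0]
      field_simp
      ring
    have hfin : t * ‖deriv w 0‖ / (1 - Complex.normSq a) ≤ 1 := by
      have : ‖deriv h 0‖ = t * ‖deriv w 0‖ / (1 - Complex.normSq a) := by
        rw [hderivh, norm_div, norm_mul, Complex.norm_real, Real.norm_eq_abs, abs_of_pos ht.1]
        congr 1
        rw [show ((1:ℂ) - (Complex.normSq a : ℂ)) = ((1 - Complex.normSq a : ℝ) : ℂ) by push_cast; ring,
          Complex.norm_real, Real.norm_eq_abs, abs_of_pos (by linarith)]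
      rwa [this] at hsch
    rw [← hnsa]
    have hpos : (0:ℝ) < 1 - Complex.normSq a := by linarith
    calc t * ‖deriv w 0‖ = (t * ‖deriv w 0‖ / (1 - Complex.normSq a)) * (1 - Complex.normSq a) := by
          field_simp
      _ ≤ 1 * (1 - Complex.normSq a) := mul_le_mul_of_nonneg_right hfin hpos.le
      _ = 1 - Complex.normSq a := one_mul _
  -- pass to the limit t → 1⁻
  have h2 : ‖deriv w 0‖ ≤ 1 - ‖w 0‖^2 := by
    have hlim : Tendsto (fun t:ℝ => 1 - t^2*‖w 0‖^2 - t*‖deriv w 0‖) (𝓝[<] (1:ℝ))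
        (𝓝 (1 - ‖w 0‖^2 - ‖deriv w 0‖)) := by
      have hc : ContinuousAt (fun t:ℝ => 1 - t^2*‖w 0‖^2 - t*‖deriv w 0‖) 1 := by fun_prop
      have h3 := hc.tendsto.mono_left (nhdsWithin_le_nhds (s := Set.Iio (1:ℝ)))
      simpa using h3
    have hev : ∀ᶠ t in 𝓝[<] (1:ℝ), 0 ≤ 1 - t^2*‖w 0‖^2 - t*‖deriv w 0‖ := by
      filter_upwards [Ioo_mem_nhdsLT_of_mem (⟨zero_lt_one, le_rfl⟩ : (1:ℝ) ∈ Set.Ioc 0 1)]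
        with t ht
      have := hkey t ht
      linarith
    have := ge_of_tendsto hlim hev
    linarith
  constructor
  · rw [← hw0]; exact wb 0 h01
  · rw [hdd, ← hw0, norm_mul]
    simp only [Complex.norm_ofNat]
    linarith [h2]

end helpers

set_option maxHeartbeats 1000000 in
theorem stmt13 (f g u v φ : ℂ → ℂ) (B₁ B₂ : ℝ)
    (hf : AnalyticOn ℂ f (ball (0:ℂ) 1)) (hfinj : Set.InjOn f (ball (0:ℂ) 1))
    (hf0 : f 0 = 0) (hf1 : deriv f 0 = 1)
    (hg : AnalyticOn ℂ g (ball (0:ℂ) 1)) (hginj : Set.InjOn g (ball (0:ℂ) 1))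
    (hinv : ∀ᶠ z in 𝓝 (0:ℂ), g (f z) = z)
    (hu : AnalyticOn ℂ u (ball (0:ℂ) 1)) (humap : ∀ z ∈ ball (0:ℂ) 1, u z ∈ ball (0:ℂ) 1) (hu0 : u 0 = 0)
    (hv : AnalyticOn ℂ v (ball (0:ℂ) 1)) (hvmap : ∀ w ∈ ball (0:ℂ) 1, v w ∈ ball (0:ℂ) 1) (hv0 : v 0 = 0)
    (hφ : AnalyticOn ℂ φ (ball (0:ℂ) 1)) (hφ0 : φ 0 = 1)
    (hB₁ : tc φ 1 = (B₁ : ℂ)) (hB₂ : tc φ 2 = (B₂ : ℂ)) (hB₁pos : 0 < B₁)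
    (hfu : ∀ z ∈ ball (0:ℂ) 1, z ≠ 0 → z * deriv f z / f z = φ (u z))
    (hgv : ∀ w ∈ ball (0:ℂ) 1, w ≠ 0 → w * deriv g w / g w = φ (v w))
    (hne : B₁ ^ 2 + B₁ - B₂ ≠ 0) :
    ‖tc f 2‖ ≤ B₁ * Real.sqrt B₁ / Real.sqrt |B₁ ^ 2 + B₁ - B₂| ∧
    ‖tc f 3‖ ≤ B₁ + |B₂ - B₁| := by
  have h01 : (0:ℂ) ∈ ball (0:ℂ) 1 := mem_ball_self one_pos
  have hfn : AnalyticOnNhd ℂ f (ball (0:ℂ) 1) := (isOpen_ball.analyticOn_iff_analyticOnNhd).mp hf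
  have hgn : AnalyticOnNhd ℂ g (ball (0:ℂ) 1) := (isOpen_ball.analyticOn_iff_analyticOnNhd).mp hg
  have hun : AnalyticOnNhd ℂ u (ball (0:ℂ) 1) := (isOpen_ball.analyticOn_iff_analyticOnNhd).mp hu
  have hvn : AnalyticOnNhd ℂ v (ball (0:ℂ) 1) := (isOpen_ball.analyticOn_iff_analyticOnNhd).mp hv
  have hφn : AnalyticOnNhd ℂ φ (ball (0:ℂ) 1) := (isOpen_ball.analyticOn_iff_analyticOnNhd).mp hφ
  -- inverse coefficients
  obtain ⟨hg0, hg1, hgtc2, hgtc3⟩ := inv_coeffs f g hfn hgn hf0 hf1 hinv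
  -- subordination on the f side
  have hPa : AnalyticOnNhd ℂ (fun z => φ (u z)) (ball (0:ℂ) 1) :=
    fun z hz => (hφn _ (humap z hz)).comp (hun z hz)
  have heqf : ∀ z ∈ ball (0:ℂ) 1, z * deriv f z = (fun z => φ (u z)) z * f z := by
    intro z hz
    rcases eq_or_ne z 0 with rfl | hz0
    · simp [hf0]
    · have hfz : f z ≠ 0 := fun h0 => hz0 (hfinj hz h01 (by rw [h0, hf0]))
      have := hfu z hz hz0
      rw [div_eq_iff hfz] at this
      simpa using this
  obtain ⟨_, hp1, hp2⟩ := sub_coeffs f (fun z => φ (u z)) hfn hPa hf0 hf1 heqf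
  obtain ⟨hc1, hc2⟩ := comp_coeffs φ u hφn hun humap hu0
  -- subordination on the g side
  have hQa : AnalyticOnNhd ℂ (fun z => φ (v z)) (ball (0:ℂ) 1) :=
    fun z hz => (hφn _ (hvmap z hz)).comp (hvn z hz)
  have heqg : ∀ z ∈ ball (0:ℂ) 1, z * deriv g z = (fun z => φ (v z)) z * g z := by
    intro z hz
    rcases eq_or_ne z 0 with rfl | hz0
    · simp [hg0]
    · have hgz : g z ≠ 0 := fun h0 => hz0 (hginj hz h01 (by rw [h0, hg0]))
      have := hgv z hz hz0
      rw [div_eq_iff hgz] at this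
      simpa using this
  obtain ⟨_, hq1, hq2⟩ := sub_coeffs g (fun z => φ (v z)) hgn hQa hg0 hg1 heqg
  obtain ⟨hd1, hd2⟩ := comp_coeffs φ v hφn hvn hvmap hv0
  -- Schwarz–Pick bounds
  obtain ⟨hus1, hus2⟩ := schwarz_pick u hun humap hu0
  obtain ⟨hvs1, hvs2⟩ := schwarz_pick v hvn hvmap hv0
  -- translate φ data
  have hφ1 : deriv φ 0 = (B₁:ℂ) := by
    rw [← hB₁]; simp [tc, iteratedDeriv_one]
  have hφ2 : deriv (deriv φ) 0 = 2 * (B₂:ℂ) := by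
    have := tc2 φ
    rw [hB₂] at this
    field_simp at this
    linear_combination -this
  -- complex coefficient equations
  set a2 : ℂ := tc f 2 with ha2
  set a3 : ℂ := tc f 3 with ha3
  set c1 : ℂ := deriv u 0 with hc1'
  set c2 : ℂ := deriv (deriv u) 0 with hc2'
  set d1 : ℂ := deriv v 0 with hd1'
  set d2 : ℂ := deriv (deriv v) 0 with hd2'
  have hE1 : a2 = (B₁:ℂ) * c1 := by rw [← hp1, hc1, hφ1]
  have hE2 : 4*a3 - 2*a2^2 = 2*(B₂:ℂ)*c1^2 + (B₁:ℂ)*c2 := by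
    have := hp2
    rw [hc2, hφ1, hφ2] at this
    linear_combination -this
  have hE3 : -a2 = (B₁:ℂ) * d1 := by
    have := hq1
    rw [hd1, hφ1, hgtc2] at this
    linear_combination -this
  have hE4 : 6*a2^2 - 4*a3 = 2*(B₂:ℂ)*d1^2 + (B₁:ℂ)*d2 := by
    have := hq2
    rw [hd2, hφ1, hφ2, hgtc2, hgtc3] at this
    linear_combination -this
  have hB₁ne : (B₁:ℂ) ≠ 0 := Complex.ofReal_ne_zero.mpr hB₁pos.ne'
  have hd1c1 : d1 = -c1 := by
    have h1 : (B₁:ℂ) * d1 = (B₁:ℂ) * (-c1) := by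
      rw [← hE3, hE1]; ring
    exact mul_left_cancel₀ hB₁ne h1
  have c1sq : a2^2 = (B₁:ℂ)^2 * c1^2 := by rw [hE1]; ring
  have d1sq : d1^2 = c1^2 := by rw [hd1c1]; ring
  have hI1 : ((4*B₁^2 - 4*B₂ : ℝ) : ℂ) * c1^2 = (B₁:ℂ)*(c2 + d2) := by
    push_cast
    linear_combination hE2 + hE4 - 4*c1sq + 2*(B₂:ℂ)*d1sq
  have hI2 : ((8:ℝ):ℂ)*a3 = ((8*B₂:ℝ):ℂ)*c1^2 + 3*(B₁:ℂ)*c2 + (B₁:ℂ)*d2 := by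
    push_cast
    linear_combination 3*hE2 + hE4 + 2*(B₂:ℂ)*d1sq
  -- real quantities
  set X : ℝ := ‖c1‖ with hX
  have hXnn : 0 ≤ X := norm_nonneg _
  have hXle1 : X ≤ 1 := hus1
  have hd1X : ‖d1‖ = X := by rw [hd1c1, norm_neg]
  have hc2b : ‖c2‖ ≤ 2*(1 - X^2) := by linarith [hus2]
  have hd2b : ‖d2‖ ≤ 2*(1 - X^2) := by
    have := hvs2
    rw [hd1X] at this
    linarith
  -- norm of hI1
  have hR1 : |B₁^2 - B₂| * X^2 ≤ B₁ * (1 - X^2) := by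
    have hn := congrArg norm hI1
    rw [norm_mul, norm_mul, norm_pow, Complex.norm_real, Complex.norm_real,
      Real.norm_eq_abs, Real.norm_eq_abs, abs_of_pos hB₁pos] at hn
    have h4 : |4*B₁^2 - 4*B₂| = 4 * |B₁^2 - B₂| := by
      rw [show 4*B₁^2 - 4*B₂ = 4*(B₁^2 - B₂) by ring, abs_mul]
      norm_num
    rw [h4] at hn
    have hb : B₁ * ‖c2 + d2‖ ≤ B₁ * (4*(1 - X^2)) := by
      refine mul_le_mul_of_nonneg_left ?_ hB₁pos.le
      calc ‖c2 + d2‖ ≤ ‖c2‖ + ‖d2‖ := norm_add_le _ _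
        _ ≤ 2*(1-X^2) + 2*(1-X^2) := add_le_add hc2b hd2b
        _ = 4*(1-X^2) := by ring
    rw [← hX] at hn
    nlinarith [hn, hb]
  -- norm of a2
  have ha2n : ‖a2‖ = B₁ * X := by
    rw [hE1, norm_mul, Complex.norm_real, Real.norm_eq_abs, abs_of_pos hB₁pos, hX]
  constructor
  · -- bound on a2
    set C : ℝ := |B₁^2 + B₁ - B₂| with hC
    have hCpos : 0 < C := abs_pos.mpr hne
    have htriC : C ≤ B₁ + |B₁^2 - B₂| := by
      calc C = |(B₁^2 - B₂) + B₁| := by rw [hC]; ring_nf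
        _ ≤ |B₁^2 - B₂| + |B₁| := abs_add_le _ _
        _ = B₁ + |B₁^2 - B₂| := by rw [abs_of_pos hB₁pos]; ring
    have hsq : (B₁*X)^2 * C ≤ B₁^3 := by
      nlinarith [mul_le_mul_of_nonneg_left hR1 (sq_nonneg B₁),
        mul_le_mul_of_nonneg_left htriC (mul_nonneg (sq_nonneg B₁) (sq_nonneg X)),
        sq_nonneg X, hB₁pos]
    have hdiv : (B₁*X)^2 ≤ B₁^3 / C := by
      rw [le_div_iff₀ hCpos]; exact hsq
    rw [ha2n]
    calc B₁ * X = Real.sqrt ((B₁*X)^2) := (Real.sqrt_sq (by positivity)).symm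
      _ ≤ Real.sqrt (B₁^3 / C) := Real.sqrt_le_sqrt hdiv
      _ = B₁ * Real.sqrt B₁ / Real.sqrt C := by
          rw [show B₁^3 = B₁^2 * B₁ by ring,
            Real.sqrt_div (by positivity : (0:ℝ) ≤ B₁^2*B₁) C,
            Real.sqrt_mul (sq_nonneg B₁), Real.sqrt_sq hB₁pos.le]
      _ = B₁ * Real.sqrt B₁ / Real.sqrt |B₁ ^ 2 + B₁ - B₂| := by rw [hC]
  · -- bound on a3
    have hn := congrArg norm hI2
    rw [norm_mul, Complex.norm_real, Real.norm_eq_abs] at hn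
    have habs8 : |(8:ℝ)| = 8 := by norm_num
    rw [habs8] at hn
    have hb : ‖((8*B₂:ℝ):ℂ)*c1^2 + 3*(B₁:ℂ)*c2 + (B₁:ℂ)*d2‖
        ≤ 8 * |B₂| *X^2 + 8*B₁*(1-X^2) := by
      calc ‖((8*B₂:ℝ):ℂ)*c1^2 + 3*(B₁:ℂ)*c2 + (B₁:ℂ)*d2‖
          ≤ ‖((8*B₂:ℝ):ℂ)*c1^2‖ + ‖3*(B₁:ℂ)*c2‖ + ‖(B₁:ℂ)*d2‖ := norm_add₃_le
        _ ≤ 8 * |B₂| *X^2 + 3*B₁*(2*(1-X^2)) + B₁*(2*(1-X^2)) := by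
            gcongr ?_ + ?_ + ?_
            · exact le_of_eq (by
                rw [norm_mul, norm_pow, Complex.norm_real, Real.norm_eq_abs, ← hX, abs_mul,
                  _root_.abs_of_nonneg (by norm_num : (0:ℝ) ≤ 8)])
            · rw [norm_mul, norm_mul, Complex.norm_real, Real.norm_eq_abs,
                abs_of_pos hB₁pos]
              have : ‖(3:ℂ)‖ = 3 := by norm_num
              rw [this]
              calc 3 * B₁ * ‖c2‖ ≤ 3 * B₁ * (2*(1-X^2)) := by
                    refine mul_le_mul_of_nonneg_left hc2b (by positivity)
                _ = 3*B₁*(2*(1-X^2)) := rfl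
            · rw [norm_mul, Complex.norm_real, Real.norm_eq_abs, abs_of_pos hB₁pos]
              exact mul_le_mul_of_nonneg_left hd2b hB₁pos.le
        _ = 8 * |B₂| *X^2 + 8*B₁*(1-X^2) := by ring
    have hfin : 8 * ‖a3‖ ≤ 8 * |B₂| *X^2 + 8*B₁*(1-X^2) := by
      rw [hn]; exact hb
    have htri : |B₂| - B₁ ≤ |B₂ - B₁| := by
      have := abs_sub_abs_le_abs_sub B₂ B₁
      rwa [abs_of_pos hB₁pos] at this
    have hXsq1 : X^2 ≤ 1 := by nlinarith [hXle1, hXnn]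
    nlinarith [hfin, htri, abs_nonneg (B₂ - B₁), sq_nonneg X,
      mul_nonneg (abs_nonneg (B₂ - B₁)) (by linarith : (0:ℝ) ≤ 1 - X^2),
      mul_nonneg (by linarith : (0:ℝ) ≤ |B₂ - B₁| - (|B₂| - B₁)) (sq_nonneg X)]
end
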